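/- Let α ∈ (0, 1], δ > 0, and suppose K := ∫_S (m₂ − m₀)²/m₀ dy ∈ (0, ∞). If a measurable function Γ : ℝ → ℝ satisfies ∫_S m₀(y)·Γ(y)² dy = 1/δ and ∫_S (m₂(y) − m₀(y))·Γ(y) dy > 1/(αδ) (the latter integral being absolutely convergent), then δ > 1/(α²·K); in particular, δ > 1/(2α²). -/

import Mathlib

open MeasureTheory Real Set

noncomputable def gaussE (x : ℝ) : ℝ := Real.exp (-(x ^ 2) / 2)

noncomputable def gaussDen (x : ℝ) : ℝ := Real.exp (-(x ^ 2) / 2) / Real.sqrt (2 * Real.pi)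

lemma gaussDen_eq (x : ℝ) : gaussDen x = gaussE x / Real.sqrt (2 * Real.pi) := rfl

lemma gaussE_pos (x : ℝ) : 0 < gaussE x := Real.exp_pos _

lemma continuous_gaussE : Continuous gaussE :=
  Real.continuous_exp.comp (((continuous_pow 2).neg).div_const 2)

lemma continuous_gaussDen : Continuous gaussDen := continuous_gaussE.div_const _

lemma gaussDen_nonneg (x : ℝ) : 0 ≤ gaussDen x :=
  div_nonneg (Real.exp_pos _).le (Real.sqrt_nonneg _)

lemma gaussE_hasDeriv (x : ℝ) : HasDerivAt gaussE (-x * gaussE x) x := by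
  have h1 : HasDerivAt (fun x : ℝ => -(x ^ 2) / 2) (-x) x := by
    have h := (hasDerivAt_pow 2 x).neg.div_const 2
    refine h.congr_deriv ?_
    push_cast
    ring
  exact h1.exp.congr_deriv (by rw [gaussE]; ring)

lemma abs_pow_le_gauss (x : ℝ) {k : ℕ} (hk : k ≤ 4) : |x| ^ k ≤ 1 + x ^ 4 := by
  rcases le_total (|x|) 1 with h | h
  · have h1 : |x| ^ k ≤ 1 := pow_le_one₀ (abs_nonneg x) h
    nlinarith [pow_nonneg (sq_nonneg x) 2, sq_nonneg (x ^ 2)]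
  · have h1 : |x| ^ k ≤ |x| ^ 4 := pow_le_pow_right₀ h hk
    have h2 : |x| ^ 4 = x ^ 4 := by
      rw [← abs_pow, abs_of_nonneg (by positivity)]
    nlinarith

lemma one_add_pow4_le (x : ℝ) : 1 + x ^ 4 ≤ 44 * Real.exp (x ^ 2 / 4) := by
  have ht : x ^ 2 / 16 + 1 ≤ Real.exp (x ^ 2 / 16) := Real.add_one_le_exp _
  have hp : Real.exp (x ^ 2 / 4) = Real.exp (x ^ 2 / 16) ^ 4 := by
    rw [show x ^ 2 / 4 = (4 : ℕ) * (x ^ 2 / 16) by push_cast; ring, Real.exp_nat_mul]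
  have h0 : (1 : ℝ) ≤ Real.exp (x ^ 2 / 16) := by nlinarith [sq_nonneg x]
  have h2 : x ^ 2 / 4 ≤ Real.exp (x ^ 2 / 16) ^ 2 := by
    nlinarith [sq_nonneg (1 - x ^ 2 / 16), sq_nonneg x]
  have h3 : x ^ 4 / 16 ≤ (Real.exp (x ^ 2 / 16) ^ 2) ^ 2 := by
    have := pow_le_pow_left₀ (by positivity : (0:ℝ) ≤ x ^ 2 / 4) h2 2
    nlinarith [this]
  have h4 : (1 : ℝ) ≤ Real.exp (x ^ 2 / 16) ^ 4 := one_le_pow₀ h0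
  rw [hp]
  nlinarith [h3, h4, pow_nonneg (Real.exp_pos (x ^ 2 / 16)).le 4]

lemma integrable_pow_mul_gaussE {k : ℕ} (hk : k ≤ 4) :
    Integrable (fun x : ℝ => x ^ k * gaussE x) := by
  have hmaj : Integrable (fun x : ℝ => 44 * Real.exp (-(1/4) * x ^ 2)) :=
    (integrable_exp_neg_mul_sq (by norm_num : (0:ℝ) < 1/4)).const_mul 44
  refine hmaj.mono' (((continuous_pow k).mul continuous_gaussE).aestronglyMeasurable)
    (ae_of_all _ fun x => ?_)
  rw [norm_mul, norm_pow, Real.norm_eq_abs, Real.norm_eq_abs, abs_of_pos (gaussE_pos x)]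
  have h1 := abs_pow_le_gauss x hk
  have h2 := one_add_pow4_le x
  have h3 : Real.exp (x ^ 2 / 4) * gaussE x = Real.exp (-(1/4) * x ^ 2) := by
    rw [gaussE, ← Real.exp_add]; congr 1; ring
  calc |x| ^ k * gaussE x ≤ (1 + x ^ 4) * gaussE x := by
        nlinarith [gaussE_pos x, h1]
    _ ≤ 44 * Real.exp (x ^ 2 / 4) * gaussE x := by nlinarith [gaussE_pos x, h2]
    _ = 44 * Real.exp (-(1/4) * x ^ 2) := by rw [mul_assoc, h3]

lemma integrable_gaussE : Integrable gaussE := by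
  have := integrable_pow_mul_gaussE (k := 0) (by norm_num)
  exact this.congr (ae_of_all _ fun x => by simp only [Pi.sub_apply, Pi.add_apply]; ring)

lemma gaussJ1 : ∫ x : ℝ, (1 - x ^ 2) * gaussE x = 0 := by
  have hd : ∀ x : ℝ, HasDerivAt (fun x => x * gaussE x) ((1 - x ^ 2) * gaussE x) x := by
    intro x
    have := (hasDerivAt_id x).mul (gaussE_hasDeriv x)
    refine this.congr_deriv ?_
    simp only [id_eq]
    ring
  have hf' : Integrable (fun x : ℝ => (1 - x ^ 2) * gaussE x) := by
    have := (integrable_pow_mul_gaussE (k := 0) (by norm_num)).sub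
      (integrable_pow_mul_gaussE (k := 2) (by norm_num))
    exact this.congr (ae_of_all _ fun x => by simp only [Pi.sub_apply, Pi.add_apply]; ring)
  have hf : Integrable (fun x : ℝ => x * gaussE x) :=
    (integrable_pow_mul_gaussE (k := 1) (by norm_num)).congr (ae_of_all _ fun x => by ring)
  exact integral_eq_zero_of_hasDerivAt_of_integrable hd hf' hf

lemma gaussJ2 : ∫ x : ℝ, (3 * x ^ 2 - x ^ 4) * gaussE x = 0 := by
  have hd : ∀ x : ℝ, HasDerivAt (fun x => x ^ 3 * gaussE x) ((3 * x ^ 2 - x ^ 4) * gaussE x) x := by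
    intro x
    have := (hasDerivAt_pow 3 x).mul (gaussE_hasDeriv x)
    refine this.congr_deriv ?_
    push_cast
    ring
  have hf' : Integrable (fun x : ℝ => (3 * x ^ 2 - x ^ 4) * gaussE x) := by
    have := ((integrable_pow_mul_gaussE (k := 2) (by norm_num)).const_mul 3).sub
      (integrable_pow_mul_gaussE (k := 4) (by norm_num))
    exact this.congr (ae_of_all _ fun x => by simp only [Pi.sub_apply, Pi.add_apply]; ring)
  have hf : Integrable (fun x : ℝ => x ^ 3 * gaussE x) :=
    integrable_pow_mul_gaussE (k := 3) (by norm_num)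
  exact integral_eq_zero_of_hasDerivAt_of_integrable hd hf' hf

lemma gaussJ0 : ∫ x : ℝ, gaussE x = Real.sqrt (2 * Real.pi) := by
  have h := integral_gaussian (1/2 : ℝ)
  rw [show Real.pi / (1/2 : ℝ) = 2 * Real.pi by ring] at h
  rw [← h]
  apply integral_congr_ae
  filter_upwards with x
  rw [gaussE]
  congr 1
  ring

lemma integrable_sq_sub_one_sq_mul_gaussE :
    Integrable (fun x : ℝ => (x ^ 2 - 1) ^ 2 * gaussE x) := by
  have := ((integrable_pow_mul_gaussE (k := 4) (by norm_num)).sub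
    ((integrable_pow_mul_gaussE (k := 2) (by norm_num)).const_mul 2)).add
    (integrable_pow_mul_gaussE (k := 0) (by norm_num))
  exact this.congr (ae_of_all _ fun x => by simp only [Pi.sub_apply, Pi.add_apply]; ring)

lemma gaussT : ∫ x : ℝ, (x ^ 2 - 1) ^ 2 * gaussE x = 2 * Real.sqrt (2 * Real.pi) := by
  have hA : Integrable (fun x : ℝ => (3 * x ^ 2 - x ^ 4) * gaussE x) := by
    have := ((integrable_pow_mul_gaussE (k := 2) (by norm_num)).const_mul 3).sub
      (integrable_pow_mul_gaussE (k := 4) (by norm_num))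
    exact this.congr (ae_of_all _ fun x => by simp only [Pi.sub_apply, Pi.add_apply]; ring)
  have hB : Integrable (fun x : ℝ => (1 - x ^ 2) * gaussE x) := by
    have := (integrable_pow_mul_gaussE (k := 0) (by norm_num)).sub
      (integrable_pow_mul_gaussE (k := 2) (by norm_num))
    exact this.congr (ae_of_all _ fun x => by simp only [Pi.sub_apply, Pi.add_apply]; ring)
  calc ∫ x : ℝ, (x ^ 2 - 1) ^ 2 * gaussE x
      = ∫ x : ℝ, (2 * gaussE x - ((3 * x ^ 2 - x ^ 4) * gaussE x + (1 - x ^ 2) * gaussE x)) :=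
        integral_congr_ae (ae_of_all _ fun x => by ring)
    _ = 2 * Real.sqrt (2 * Real.pi) := by
        have hAB : Integrable (fun x : ℝ =>
            (3 * x ^ 2 - x ^ 4) * gaussE x + (1 - x ^ 2) * gaussE x) :=
          (hA.add hB).congr (ae_of_all _ fun x => by simp only [Pi.add_apply])
        rw [integral_sub (integrable_gaussE.const_mul 2) hAB, integral_add hA hB,
          gaussJ1, gaussJ2, MeasureTheory.integral_const_mul, gaussJ0]
        ring

lemma integrable_sq_sub_one_sq_mul_gaussDen :
    Integrable (fun x : ℝ => (x ^ 2 - 1) ^ 2 * gaussDen x) := by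
  have := integrable_sq_sub_one_sq_mul_gaussE.div_const (Real.sqrt (2 * Real.pi))
  exact this.congr (ae_of_all _ fun x => by simp only [gaussDen_eq]; ring)

lemma gauss_moment : ∫ x : ℝ, (x ^ 2 - 1) ^ 2 * gaussDen x = 2 := by
  have hs : (0:ℝ) < Real.sqrt (2 * Real.pi) := Real.sqrt_pos.mpr (by positivity)
  calc ∫ x : ℝ, (x ^ 2 - 1) ^ 2 * gaussDen x
      = (∫ x : ℝ, (x ^ 2 - 1) ^ 2 * gaussE x) / Real.sqrt (2 * Real.pi) := by
        rw [← integral_div]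
        apply integral_congr_ae
        filter_upwards with x
        rw [gaussDen_eq]
        ring
    _ = 2 := by rw [gaussT]; field_simp

/-- If a linear constraint `∫_S (m₂−m₀)·Γ > 1/(αδ)` is achievable under the
normalization `∫_S m₀·Γ² = 1/δ`, then `δ > 1/(α²K)` where
`K = ∫_S (m₂−m₀)²/m₀`; in particular `δ > 1/(2α²)`. -/
theorem spectral_threshold_lower_bound
    (p : ℝ → ℝ → ℝ)
    (hp_meas : Measurable (Function.uncurry p))
    (hp_nonneg : ∀ g y, 0 ≤ p g y)
    (hp_norm : ∀ g, ∫ y, p g y = 1)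
    (m₀ m₂ : ℝ → ℝ)
    (hm₀ : ∀ y, m₀ y = ∫ g, Real.exp (-(g ^ 2) / 2) / Real.sqrt (2 * Real.pi) * p g y)
    (hm₂ : ∀ y, m₂ y =
      ∫ g, g ^ 2 * (Real.exp (-(g ^ 2) / 2) / Real.sqrt (2 * Real.pi)) * p g y)
    (α δ : ℝ) (hα : 0 < α) (hα1 : α ≤ 1) (hδ : 0 < δ)
    (K : ℝ)
    (hK_int : IntegrableOn (fun y => (m₂ y - m₀ y) ^ 2 / m₀ y) {y : ℝ | 0 < m₀ y})
    (hK : K = ∫ y in {y : ℝ | 0 < m₀ y}, (m₂ y - m₀ y) ^ 2 / m₀ y)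
    (hKpos : 0 < K)
    (Γ : ℝ → ℝ) (hΓ_meas : Measurable Γ)
    (hΓ2_int : IntegrableOn (fun y => m₀ y * Γ y ^ 2) {y : ℝ | 0 < m₀ y})
    (hΓ2 : ∫ y in {y : ℝ | 0 < m₀ y}, m₀ y * Γ y ^ 2 = 1 / δ)
    (hΓ1_int : IntegrableOn (fun y => (m₂ y - m₀ y) * Γ y) {y : ℝ | 0 < m₀ y})
    (hΓ1 : 1 / (α * δ) < ∫ y in {y : ℝ | 0 < m₀ y}, (m₂ y - m₀ y) * Γ y) :
    1 / (α ^ 2 * K) < δ ∧ 1 / (2 * α ^ 2) < δ := by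
  set S : Set ℝ := {y : ℝ | 0 < m₀ y} with hSdef
  have hpy : ∀ y, Measurable fun g => p g y := fun y =>
    hp_meas.comp (measurable_id.prodMk measurable_const)
  have hpg : ∀ g, Measurable (p g) := fun g =>
    hp_meas.comp (measurable_const.prodMk measurable_id)
  have hm0eq : ∀ y, m₀ y = ∫ g, gaussDen g * p g y := hm₀
  have hm2eq : ∀ y, m₂ y = ∫ g, g ^ 2 * gaussDen g * p g y := hm₂
  have hprodmeas : Measurable (fun q : ℝ × ℝ => gaussDen q.1 * p q.1 q.2) :=
    (continuous_gaussDen.measurable.comp measurable_fst).mul hp_meas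
  have hm₀_meas : Measurable m₀ := by
    have h := (hprodmeas.stronglyMeasurable.integral_prod_left' (μ := (volume : Measure ℝ))).measurable
    have he : m₀ = fun y => ∫ g, gaussDen g * p g y := funext hm0eq
    rw [he]; exact h
  have hm₂_meas : Measurable m₂ := by
    have hpm2 : Measurable (fun q : ℝ × ℝ => q.1 ^ 2 * gaussDen q.1 * p q.1 q.2) :=
      ((measurable_fst.pow_const 2).mul
        (continuous_gaussDen.measurable.comp measurable_fst)).mul hp_meas
    have h := (hpm2.stronglyMeasurable.integral_prod_left' (μ := (volume : Measure ℝ))).measurable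
    have he : m₂ = fun y => ∫ g, g ^ 2 * gaussDen g * p g y := funext hm2eq
    rw [he]; exact h
  have hS : MeasurableSet S := measurableSet_lt measurable_const hm₀_meas
  have memS : ∀ᵐ y ∂(volume.restrict S), y ∈ S := ae_restrict_mem hS
  have hpq : (2:ℝ).HolderConjugate 2 := ⟨by norm_num, by norm_num, by norm_num⟩
  -- Part 1 : Cauchy-Schwarz on S
  set f : ℝ → ℝ := fun y => (m₂ y - m₀ y) / Real.sqrt (m₀ y) with hfdef
  set h : ℝ → ℝ := fun y => Real.sqrt (m₀ y) * Γ y with hhdef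
  have hf_meas : Measurable f := (hm₂_meas.sub hm₀_meas).div hm₀_meas.sqrt
  have hh_meas : Measurable h := hm₀_meas.sqrt.mul hΓ_meas
  have hfS : (fun y => f y ^ 2) =ᵐ[volume.restrict S] fun y => (m₂ y - m₀ y) ^ 2 / m₀ y := by
    filter_upwards [memS] with y hy
    have hy' : 0 < m₀ y := hy
    simp only [hfdef, div_pow, Real.sq_sqrt hy'.le]
  have hhS : (fun y => h y ^ 2) =ᵐ[volume.restrict S] fun y => m₀ y * Γ y ^ 2 := by
    filter_upwards [memS] with y hy
    have hy' : 0 < m₀ y := hy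
    simp only [hhdef, mul_pow, Real.sq_sqrt hy'.le]
  have hfhS : ∀ᵐ y ∂(volume.restrict S), f y * h y = (m₂ y - m₀ y) * Γ y := by
    filter_upwards [memS] with y hy
    have hy' : 0 < Real.sqrt (m₀ y) := Real.sqrt_pos.mpr hy
    simp only [hfdef, hhdef]
    field_simp
  have hf2int : Integrable (fun y => f y ^ 2) (volume.restrict S) := hK_int.congr hfS.symm
  have hh2int : Integrable (fun y => h y ^ 2) (volume.restrict S) := hΓ2_int.congr hhS.symm
  have hfmem : MemLp f (ENNReal.ofReal 2) (volume.restrict S) := by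
    rw [show ENNReal.ofReal (2:ℝ) = 2 by norm_num]
    exact (memLp_two_iff_integrable_sq hf_meas.aestronglyMeasurable).mpr hf2int
  have hhmem : MemLp h (ENNReal.ofReal 2) (volume.restrict S) := by
    rw [show ENNReal.ofReal (2:ℝ) = 2 by norm_num]
    exact (memLp_two_iff_integrable_sq hh_meas.aestronglyMeasurable).mpr hh2int
  have hCS := integral_mul_norm_le_Lp_mul_Lq hpq hfmem hhmem
  have hrw1 : (∫ y in S, ‖f y‖ ^ (2:ℝ)) = K := by
    rw [hK]
    apply integral_congr_ae
    filter_upwards [hfS] with y hy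
    rw [show (2:ℝ) = ((2:ℕ):ℝ) by norm_num, Real.rpow_natCast, Real.norm_eq_abs, sq_abs, hy]
  have hrw2 : (∫ y in S, ‖h y‖ ^ (2:ℝ)) = 1/δ := by
    rw [← hΓ2]
    apply integral_congr_ae
    filter_upwards [hhS] with y hy
    rw [show (2:ℝ) = ((2:ℕ):ℝ) by norm_num, Real.rpow_natCast, Real.norm_eq_abs, sq_abs, hy]
  set A := ∫ y in S, (m₂ y - m₀ y) * Γ y with hAdef
  have hA1 : A ≤ Real.sqrt K * Real.sqrt (1/δ) := by
    have h1 : A ≤ ∫ y in S, ‖f y‖ * ‖h y‖ := by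
      calc A ≤ ‖A‖ := le_abs_self A
        _ ≤ ∫ y in S, ‖(m₂ y - m₀ y) * Γ y‖ := norm_integral_le_integral_norm _
        _ = ∫ y in S, ‖f y‖ * ‖h y‖ := by
            apply integral_congr_ae
            filter_upwards [hfhS] with y hy
            rw [← norm_mul, hy]
    have h2 : (∫ y in S, ‖f y‖ * ‖h y‖) ≤ K ^ ((1:ℝ)/2) * (1/δ) ^ ((1:ℝ)/2) := by
      have h3 := hCS
      rw [hrw1, hrw2] at h3
      exact h3
    calc A ≤ K ^ ((1:ℝ)/2) * (1/δ) ^ ((1:ℝ)/2) := h1.trans h2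
      _ = Real.sqrt K * Real.sqrt (1/δ) := by
          rw [Real.sqrt_eq_rpow, Real.sqrt_eq_rpow]
  have hApos : 0 < A := lt_trans (by positivity) hΓ1
  have hsqA : A ^ 2 ≤ K * (1/δ) := by
    calc A ^ 2 ≤ (Real.sqrt K * Real.sqrt (1/δ)) ^ 2 := pow_le_pow_left₀ hApos.le hA1 2
      _ = K * (1/δ) := by
          rw [mul_pow, Real.sq_sqrt hKpos.le, Real.sq_sqrt (by positivity : (0:ℝ) ≤ 1/δ)]
  have hkey : 1 < α ^ 2 * K * δ := by
    have h1 : (1/(α*δ)) ^ 2 < A ^ 2 := pow_lt_pow_left₀ hΓ1 (by positivity) (by norm_num)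
    have h2 : (1/(α*δ)) ^ 2 < K * (1/δ) := lt_of_lt_of_le h1 hsqA
    have h3 := mul_lt_mul_of_pos_right h2 (by positivity : (0:ℝ) < (α*δ)^2)
    have e1 : (1/(α*δ)) ^ 2 * (α*δ)^2 = 1 := by field_simp
    have e2 : K * (1/δ) * (α*δ)^2 = α^2*K*δ := by field_simp
    rw [e1, e2] at h3
    exact h3
  have goal1 : 1 / (α ^ 2 * K) < δ := by
    rw [div_lt_iff₀ (by positivity)]
    calc (1:ℝ) < α^2*K*δ := hkey
      _ = δ * (α^2*K) := by ring
  -- Part 2 : K ≤ 2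
  have hp_int : ∀ g, Integrable (p g) := by
    intro g
    by_contra hc
    have h1 := hp_norm g
    rw [integral_undef hc] at h1
    norm_num at h1
  have hpt : ∀ y ∈ S, ENNReal.ofReal ((m₂ y - m₀ y) ^ 2 / m₀ y) ≤
      ∫⁻ g, ENNReal.ofReal ((g ^ 2 - 1) ^ 2 * (gaussDen g * p g y)) := by
    intro y hy
    have hy' : 0 < m₀ y := hy
    set F : ℝ → ℝ := fun g => gaussDen g * p g y with hFdef
    have hF_meas : Measurable F := continuous_gaussDen.measurable.mul (hpy y)
    have hF_nonneg : ∀ g, 0 ≤ F g := fun g =>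
      mul_nonneg (gaussDen_nonneg g) (hp_nonneg g y)
    have hm0y : m₀ y = ∫ g, F g := hm0eq y
    have hF_int : Integrable F := by
      by_contra hc
      rw [integral_undef hc] at hm0y
      exact absurd hm0y (ne_of_gt hy')
    have hQmeas : Measurable (fun g => (g ^ 2 - 1) ^ 2 * F g) :=
      ((((continuous_pow 2).sub continuous_const).pow 2).measurable).mul hF_meas
    by_cases hQint : Integrable (fun g => (g ^ 2 - 1) ^ 2 * F g)
    · set R := ∫ g, (g ^ 2 - 1) ^ 2 * F g with hRdef
      have hRnn : 0 ≤ R :=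
        integral_nonneg fun g => mul_nonneg (by positivity) (hF_nonneg g)
      have hG_int : Integrable (fun g => g ^ 2 * F g) := by
        refine (hQint.add (hF_int.const_mul 2)).mono'
          (((continuous_pow 2).measurable).mul hF_meas).aestronglyMeasurable
          (ae_of_all _ fun g => ?_)
        have h1 := hF_nonneg g
        have h2 : g ^ 2 ≤ (g ^ 2 - 1) ^ 2 + 2 := by nlinarith [sq_nonneg (g ^ 2 - 3/2)]
        simp only [Pi.add_apply]
        rw [Real.norm_eq_abs, abs_of_nonneg (mul_nonneg (sq_nonneg g) h1)]
        nlinarith [mul_le_mul_of_nonneg_right h2 h1]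
      have hm2y : m₂ y = ∫ g, g ^ 2 * F g := by
        rw [hm2eq y]
        apply integral_congr_ae
        filter_upwards with g
        simp only [hFdef]
        ring
      have hsub : m₂ y - m₀ y = ∫ g, (g ^ 2 - 1) * F g := by
        rw [hm2y, hm0y, ← integral_sub hG_int hF_int]
        apply integral_congr_ae
        filter_upwards with g
        ring
      set u : ℝ → ℝ := fun g => |g ^ 2 - 1| * Real.sqrt (F g) with hudef
      set v : ℝ → ℝ := fun g => Real.sqrt (F g) with hvdef
      have hu_meas : Measurable u :=
        ((((continuous_pow 2).sub continuous_const).abs).measurable).mul hF_meas.sqrt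
      have hv_meas : Measurable v := hF_meas.sqrt
      have hu2 : ∀ g, u g ^ 2 = (g ^ 2 - 1) ^ 2 * F g := fun g => by
        simp only [hudef, mul_pow, sq_abs, Real.sq_sqrt (hF_nonneg g)]
      have hv2 : ∀ g, v g ^ 2 = F g := fun g => by
        simp only [hvdef, Real.sq_sqrt (hF_nonneg g)]
      have humem : MemLp u (ENNReal.ofReal 2) (volume : Measure ℝ) := by
        rw [show ENNReal.ofReal (2:ℝ) = 2 by norm_num]
        exact (memLp_two_iff_integrable_sq hu_meas.aestronglyMeasurable).mpr
          (hQint.congr (ae_of_all _ fun g => (hu2 g).symm))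
      have hvmem : MemLp v (ENNReal.ofReal 2) (volume : Measure ℝ) := by
        rw [show ENNReal.ofReal (2:ℝ) = 2 by norm_num]
        exact (memLp_two_iff_integrable_sq hv_meas.aestronglyMeasurable).mpr
          (hF_int.congr (ae_of_all _ fun g => (hv2 g).symm))
      have hCS2 := integral_mul_norm_le_Lp_mul_Lq hpq humem hvmem
      have e1 : (∫ g : ℝ, ‖u g‖ * ‖v g‖) = ∫ g, |g ^ 2 - 1| * F g := by
        apply integral_congr_ae
        filter_upwards with g
        simp only [Real.norm_eq_abs, hudef, hvdef]
        rw [abs_of_nonneg (by positivity : (0:ℝ) ≤ |g ^ 2 - 1| * Real.sqrt (F g)),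
          abs_of_nonneg (Real.sqrt_nonneg (F g)), mul_assoc,
          Real.mul_self_sqrt (hF_nonneg g)]
      have e2 : (∫ g : ℝ, ‖u g‖ ^ (2:ℝ)) = R := by
        rw [hRdef]
        apply integral_congr_ae
        filter_upwards with g
        rw [show (2:ℝ) = ((2:ℕ):ℝ) by norm_num, Real.rpow_natCast, Real.norm_eq_abs,
          sq_abs, hu2 g]
      have e3 : (∫ g : ℝ, ‖v g‖ ^ (2:ℝ)) = m₀ y := by
        rw [hm0y]
        apply integral_congr_ae
        filter_upwards with g
        rw [show (2:ℝ) = ((2:ℕ):ℝ) by norm_num, Real.rpow_natCast, Real.norm_eq_abs,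
          sq_abs, hv2 g]
      rw [e1, e2, e3] at hCS2
      have habs : |m₂ y - m₀ y| ≤ ∫ g, |g ^ 2 - 1| * F g := by
        calc |m₂ y - m₀ y| = ‖∫ g, (g ^ 2 - 1) * F g‖ := by rw [hsub, Real.norm_eq_abs]
          _ ≤ ∫ g, ‖(g ^ 2 - 1) * F g‖ := norm_integral_le_integral_norm _
          _ = ∫ g, |g ^ 2 - 1| * F g := by
              apply integral_congr_ae
              filter_upwards with g
              rw [Real.norm_eq_abs, abs_mul, abs_of_nonneg (hF_nonneg g)]
      have hsq : (m₂ y - m₀ y) ^ 2 ≤ R * m₀ y := by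
        have h1 : |m₂ y - m₀ y| ≤ Real.sqrt R * Real.sqrt (m₀ y) := by
          rw [Real.sqrt_eq_rpow, Real.sqrt_eq_rpow]
          exact habs.trans hCS2
        calc (m₂ y - m₀ y) ^ 2 = |m₂ y - m₀ y| ^ 2 := (sq_abs _).symm
          _ ≤ (Real.sqrt R * Real.sqrt (m₀ y)) ^ 2 := pow_le_pow_left₀ (abs_nonneg _) h1 2
          _ = R * m₀ y := by rw [mul_pow, Real.sq_sqrt hRnn, Real.sq_sqrt hy'.le]
      have hdiv : (m₂ y - m₀ y) ^ 2 / m₀ y ≤ R := (div_le_iff₀ hy').mpr hsq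
      calc ENNReal.ofReal ((m₂ y - m₀ y) ^ 2 / m₀ y) ≤ ENNReal.ofReal R :=
            ENNReal.ofReal_le_ofReal hdiv
        _ = ∫⁻ g, ENNReal.ofReal ((g ^ 2 - 1) ^ 2 * (gaussDen g * p g y)) := by
            rw [hRdef]
            exact ofReal_integral_eq_lintegral_ofReal hQint
              (ae_of_all _ fun g => mul_nonneg (by positivity) (hF_nonneg g))
    · have htop : (∫⁻ g, ENNReal.ofReal ((g ^ 2 - 1) ^ 2 * (gaussDen g * p g y))) = ⊤ := by
        by_contra hne
        exact hQint ⟨hQmeas.aestronglyMeasurable,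
          (hasFiniteIntegral_iff_ofReal (ae_of_all _ fun g =>
            mul_nonneg (by positivity) (hF_nonneg g))).mpr (Ne.lt_top hne)⟩
      rw [htop]
      exact le_top
  have hswap : (∫⁻ y, ∫⁻ g, ENNReal.ofReal ((g ^ 2 - 1) ^ 2 * (gaussDen g * p g y))) =
      ENNReal.ofReal 2 := by
    have hmeas : Measurable (fun q : ℝ × ℝ =>
        ENNReal.ofReal ((q.2 ^ 2 - 1) ^ 2 * (gaussDen q.2 * p q.2 q.1))) := by
      apply ENNReal.measurable_ofReal.comp
      exact (((measurable_snd.pow_const 2).sub measurable_const).pow_const 2).mul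
        ((continuous_gaussDen.measurable.comp measurable_snd).mul
          (hp_meas.comp (measurable_snd.prodMk measurable_fst)))
    have hsw := lintegral_lintegral_swap (μ := (volume : Measure ℝ)) (ν := (volume : Measure ℝ))
      (f := fun (y g : ℝ) => ENNReal.ofReal ((g ^ 2 - 1) ^ 2 * (gaussDen g * p g y)))
      hmeas.aemeasurable
    rw [hsw]
    have hinner : ∀ g : ℝ, (∫⁻ y, ENNReal.ofReal ((g ^ 2 - 1) ^ 2 * (gaussDen g * p g y))) =
        ENNReal.ofReal ((g ^ 2 - 1) ^ 2 * gaussDen g) := by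
      intro g
      have h1 : ∀ y, ENNReal.ofReal ((g ^ 2 - 1) ^ 2 * (gaussDen g * p g y)) =
          ENNReal.ofReal ((g ^ 2 - 1) ^ 2 * gaussDen g) * ENNReal.ofReal (p g y) := by
        intro y
        rw [← ENNReal.ofReal_mul (mul_nonneg (by positivity) (gaussDen_nonneg g))]
        congr 1
        ring
      have hmp : Measurable fun y => ENNReal.ofReal (p g y) :=
        ENNReal.measurable_ofReal.comp (hpg g)
      simp_rw [h1]
      rw [lintegral_const_mul _ hmp,
        ← ofReal_integral_eq_lintegral_ofReal (hp_int g) (ae_of_all _ fun y => hp_nonneg g y),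
        hp_norm g]
      simp
    simp_rw [hinner]
    rw [← ofReal_integral_eq_lintegral_ofReal integrable_sq_sub_one_sq_mul_gaussDen
      (ae_of_all _ fun x => mul_nonneg (by positivity) (gaussDen_nonneg x)), gauss_moment]
  have hK2 : K ≤ 2 := by
    have h1 : ENNReal.ofReal K ≤ ENNReal.ofReal 2 := by
      have hnn : 0 ≤ᵐ[volume.restrict S] fun y => (m₂ y - m₀ y) ^ 2 / m₀ y := by
        filter_upwards [memS] with y hy
        exact div_nonneg (sq_nonneg _) (le_of_lt hy)
      rw [hK, ofReal_integral_eq_lintegral_ofReal hK_int hnn]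
      calc (∫⁻ y in S, ENNReal.ofReal ((m₂ y - m₀ y) ^ 2 / m₀ y))
          ≤ ∫⁻ y in S, ∫⁻ g, ENNReal.ofReal ((g ^ 2 - 1) ^ 2 * (gaussDen g * p g y)) := by
            apply lintegral_mono_ae
            filter_upwards [memS] with y hy using hpt y hy
        _ ≤ ∫⁻ y, ∫⁻ g, ENNReal.ofReal ((g ^ 2 - 1) ^ 2 * (gaussDen g * p g y)) :=
            lintegral_mono' Measure.restrict_le_self le_rfl
        _ = ENNReal.ofReal 2 := hswap
    exact (ENNReal.ofReal_le_ofReal_iff (by norm_num)).mp h1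
  refine ⟨goal1, lt_of_le_of_lt ?_ goal1⟩
  apply one_div_le_one_div_of_le (by positivity)
  nlinarith [hK2, sq_nonneg α, hα]
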